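/- For f : ℝⁿ → ℝ (n > 1), f(x) = |x_n - ‖pr(x)‖| + x_n/2 with pr(x) = (x_1,…,x_{n-1}), the point x = 0 is Clarke critical: 0 ∈ ∂f(0). -/

import Mathlib

open Filter Set Topology RealInnerProductSpace

set_option maxHeartbeats 1000000
set_option linter.unusedVariables false

noncomputable def clarkeDir {E : Type*} [NormedAddCommGroup E] [InnerProductSpace ℝ E]
    (f : E → ℝ) (x v : E) : ℝ :=
  Filter.limsup (fun p : E × ℝ => (f (p.1 + p.2 • v) - f p.1) / p.2)
    ((nhds x) ×ˢ (nhdsWithin 0 (Set.Ioi 0)))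

noncomputable def clarkeSubdiff {E : Type*} [NormedAddCommGroup E] [InnerProductSpace ℝ E]
    (f : E → ℝ) (x : E) : Set E :=
  {ξ | ∀ v, ⟪ξ, v⟫ ≤ clarkeDir f x v}

noncomputable def goldsteinSubdiff {E : Type*} [NormedAddCommGroup E] [InnerProductSpace ℝ E]
    (f : E → ℝ) (ε : ℝ) (x : E) : Set E :=
  convexHull ℝ (⋃ y ∈ Metric.closedBall x ε, clarkeSubdiff f y)


noncomputable def prE {n : ℕ} (x : EuclideanSpace ℝ (Fin (n + 1))) :
    EuclideanSpace ℝ (Fin n) :=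
  WithLp.toLp 2 (fun i => x i.castSucc)

noncomputable def snocE {n : ℕ} (u : EuclideanSpace ℝ (Fin n)) (r : ℝ) :
    EuclideanSpace ℝ (Fin (n + 1)) :=
  WithLp.toLp 2 (fun i => (Fin.snoc (fun j : Fin n => u j) r : Fin (n + 1) → ℝ) i)

noncomputable def fEx (n : ℕ) (x : EuclideanSpace ℝ (Fin (n + 1))) : ℝ :=
  |x (Fin.last n) - ‖prE x‖| + x (Fin.last n) / 2

lemma snocE_last {n : ℕ} (u : EuclideanSpace ℝ (Fin n)) (r : ℝ) :
    snocE u r (Fin.last n) = r := by simp [snocE]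

lemma prE_snocE {n : ℕ} (u : EuclideanSpace ℝ (Fin n)) (r : ℝ) : prE (snocE u r) = u := by
  ext i; simp [prE, snocE]

lemma fEx_snocE {n : ℕ} (p : EuclideanSpace ℝ (Fin n)) (a : ℝ) :
    fEx n (snocE p a) = |a - ‖p‖| + a / 2 := by
  rw [fEx, snocE_last, prE_snocE]

lemma snocE_eta {n : ℕ} (x : EuclideanSpace ℝ (Fin (n + 1))) :
    snocE (prE x) (x (Fin.last n)) = x := by
  ext i
  refine Fin.lastCases ?_ ?_ i <;> simp [snocE, prE]

lemma norm_snocE_sq {n : ℕ} (p : EuclideanSpace ℝ (Fin n)) (a : ℝ) :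
    ‖snocE p a‖ ^ 2 = ‖p‖ ^ 2 + a ^ 2 := by
  have h1 : ‖snocE p a‖ ^ 2 = ∑ i, ‖snocE p a i‖ ^ 2 := by
    rw [EuclideanSpace.norm_eq, Real.sq_sqrt (by positivity)]
  have h2 : ‖p‖ ^ 2 = ∑ i, ‖p i‖ ^ 2 := by
    rw [EuclideanSpace.norm_eq, Real.sq_sqrt (by positivity)]
  rw [h1, h2, Fin.sum_univ_castSucc]
  simp [snocE, Real.norm_eq_abs, sq_abs]

lemma norm_snocE_le {n : ℕ} (p : EuclideanSpace ℝ (Fin n)) (a : ℝ) :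
    ‖snocE p a‖ ≤ ‖p‖ + |a| := by
  have h := norm_snocE_sq p a
  nlinarith [norm_nonneg (snocE p a), norm_nonneg p, abs_nonneg a, sq_abs a,
    mul_nonneg (norm_nonneg p) (abs_nonneg a)]

lemma abs_last_le {n : ℕ} (x : EuclideanSpace ℝ (Fin (n + 1))) :
    |x (Fin.last n)| ≤ ‖x‖ := by
  have h := norm_snocE_sq (prE x) (x (Fin.last n))
  rw [snocE_eta] at h
  nlinarith [norm_nonneg x, abs_nonneg (x (Fin.last n)), sq_abs (x (Fin.last n)),
    sq_nonneg ‖prE x‖]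

lemma prE_norm_le {n : ℕ} (x : EuclideanSpace ℝ (Fin (n + 1))) : ‖prE x‖ ≤ ‖x‖ := by
  have h := norm_snocE_sq (prE x) (x (Fin.last n))
  rw [snocE_eta] at h
  nlinarith [norm_nonneg x, norm_nonneg (prE x), sq_nonneg (x (Fin.last n))]

lemma prE_sub {n : ℕ} (x y : EuclideanSpace ℝ (Fin (n + 1))) :
    prE (x - y) = prE x - prE y := by
  ext i; simp [prE]

lemma fEx_sub_le {n : ℕ} (x y : EuclideanSpace ℝ (Fin (n + 1))) :
    fEx n x - fEx n y ≤ 3 * ‖x - y‖ := by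
  have h1 : |x (Fin.last n) - y (Fin.last n)| ≤ ‖x - y‖ := by
    have := abs_last_le (x - y)
    simpa using this
  have h2 : |‖prE x‖ - ‖prE y‖| ≤ ‖x - y‖ := by
    calc |‖prE x‖ - ‖prE y‖| ≤ ‖prE x - prE y‖ := abs_norm_sub_norm_le _ _
    _ = ‖prE (x - y)‖ := by rw [prE_sub]
    _ ≤ ‖x - y‖ := prE_norm_le _
  have h3 : |x (Fin.last n) - ‖prE x‖| - |y (Fin.last n) - ‖prE y‖| ≤
      |(x (Fin.last n) - ‖prE x‖) - (y (Fin.last n) - ‖prE y‖)| :=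
    abs_sub_abs_le_abs_sub _ _
  have h4 : |(x (Fin.last n) - ‖prE x‖) - (y (Fin.last n) - ‖prE y‖)| ≤
      |x (Fin.last n) - y (Fin.last n)| + |‖prE x‖ - ‖prE y‖| := by
    have : (x (Fin.last n) - ‖prE x‖) - (y (Fin.last n) - ‖prE y‖) =
        (x (Fin.last n) - y (Fin.last n)) - (‖prE x‖ - ‖prE y‖) := by ring
    rw [this]
    exact abs_sub _ _
  have h5 := le_abs_self (x (Fin.last n) - y (Fin.last n))
  have h6 := norm_nonneg (x - y)
  unfold fEx
  linarith

lemma fEx_snoc_add {n : ℕ} (p : EuclideanSpace ℝ (Fin n)) (a t : ℝ)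
    (v : EuclideanSpace ℝ (Fin (n + 1))) :
    fEx n (snocE p a + t • v) =
      |(a + t * v (Fin.last n)) - ‖p + t • prE v‖| + (a + t * v (Fin.last n)) / 2 := by
  have h1 : (snocE p a + t • v) (Fin.last n) = a + t * v (Fin.last n) := by
    simp [snocE_last, smul_eq_mul]
  have h2 : prE (snocE p a + t • v) = p + t • prE v := by
    ext i; simp [prE, snocE]
  rw [fEx, h1, h2]

theorem stmt18 {n : ℕ} (hn : 1 ≤ n) :
    (0 : EuclideanSpace ℝ (Fin (n + 1))) ∈ clarkeSubdiff (fEx n) 0 := by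
  intro v
  rw [inner_zero_left]
  set w : EuclideanSpace ℝ (Fin n) := prE v with hwdef
  set s : ℝ := v (Fin.last n) with hsdef
  set F := ((nhds (0 : EuclideanSpace ℝ (Fin (n + 1)))) ×ˢ (nhdsWithin (0:ℝ) (Set.Ioi 0)))
    with hF
  set q : EuclideanSpace ℝ (Fin (n + 1)) × ℝ → ℝ :=
    fun p => (fEx n (p.1 + p.2 • v) - fEx n p.1) / p.2 with hq
  have hbdd : F.IsBoundedUnder (· ≤ ·) q := by
    refine ⟨3 * ‖v‖, ?_⟩
    rw [Filter.eventually_map]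
    have hpos : ∀ᶠ p : EuclideanSpace ℝ (Fin (n + 1)) × ℝ in F, p.2 ∈ Set.Ioi (0:ℝ) :=
      Filter.Eventually.prod_inr eventually_mem_nhdsWithin _
    filter_upwards [hpos] with p hp
    have ht : (0:ℝ) < p.2 := hp
    have hlip := fEx_sub_le (p.1 + p.2 • v) p.1
    have hnorm : ‖p.1 + p.2 • v - p.1‖ = p.2 * ‖v‖ := by
      rw [add_sub_cancel_left, norm_smul, Real.norm_eq_abs, abs_of_pos ht]
    rw [hnorm] at hlip
    rw [hq, div_le_iff₀ ht]
    nlinarith [norm_nonneg v]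
  have hfreq : ∃ᶠ p in F, (0:ℝ) ≤ q p := by
    rw [Filter.frequently_iff]
    intro S hS
    rw [Filter.mem_prod_iff] at hS
    obtain ⟨U, hU, T, hT, hUT⟩ := hS
    obtain ⟨r, hr, hball⟩ := Metric.mem_nhds_iff.mp hU
    obtain ⟨δ, hδ, hIoo⟩ := mem_nhdsGT_iff_exists_Ioo_subset.mp hT
    have hδ0 : (0:ℝ) < δ := hδ
    set ε : ℝ := r / 4 with hεdef
    have hε0 : 0 < ε := by positivity
    have hw1 : (0:ℝ) < ‖w‖ + 1 := by positivity
    set t : ℝ := min (δ / 2) (ε / (‖w‖ + 1)) with htdef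
    have ht0 : 0 < t := lt_min (by linarith) (by positivity)
    have htδ : t < δ := lt_of_le_of_lt (min_le_left _ _) (by linarith)
    have htw : t * ‖w‖ < ε := by
      have h1 : t ≤ ε / (‖w‖ + 1) := min_le_right _ _
      have h2 : t * (‖w‖ + 1) ≤ ε := by
        rw [← le_div_iff₀ hw1]; exact h1
      nlinarith [norm_nonneg w]
    -- membership helper
    have hmem : ∀ p : EuclideanSpace ℝ (Fin n), ∀ a : ℝ, ‖p‖ ≤ ε → |a| ≤ ε →
        (snocE p a, t) ∈ S := by
      intro p a hp ha
      apply hUT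
      refine ⟨hball ?_, hIoo ⟨ht0, htδ⟩⟩
      rw [Metric.mem_ball, dist_zero_right]
      have := norm_snocE_le p a
      have : ‖snocE p a‖ ≤ 2 * ε := by linarith
      linarith
    by_cases hs : 0 ≤ s
    · by_cases hw : w = (0 : EuclideanSpace ℝ (Fin n))
      · refine ⟨(snocE 0 ε, t), hmem 0 ε (by simp; positivity) (by rw [abs_of_pos hε0]), ?_⟩
        have hD : 0 ≤ fEx n (snocE 0 ε + t • v) - fEx n (snocE 0 ε) := by
          rw [fEx_snoc_add, fEx_snocE, ← hsdef, ← hwdef, hw]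
          simp only [smul_zero, add_zero, norm_zero, sub_zero]
          rw [abs_of_pos hε0, abs_of_nonneg (by nlinarith : (0:ℝ) ≤ ε + t * s)]
          nlinarith
        exact div_nonneg hD ht0.le
      · have hnw : 0 < ‖w‖ := norm_pos_iff.mpr hw
        set p : EuclideanSpace ℝ (Fin n) := (-(ε / ‖w‖)) • w with hpdef
        have hpn : ‖p‖ = ε := by
          rw [hpdef, norm_smul, Real.norm_eq_abs, abs_neg,
            abs_of_nonneg (div_nonneg hε0.le hnw.le), div_mul_cancel₀ _ hnw.ne']
        have hptw : ‖p + t • w‖ = ε - t * ‖w‖ := by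
          have hcomb : p + t • w = (t - ε / ‖w‖) • w := by
            rw [hpdef, ← add_smul, neg_add_eq_sub]
          have hneg : t - ε / ‖w‖ ≤ 0 := by
            have : t ≤ ε / ‖w‖ := by rw [le_div_iff₀ hnw]; linarith
            linarith
          rw [hcomb, norm_smul, Real.norm_eq_abs, abs_of_nonpos hneg, neg_sub, sub_mul,
            div_mul_cancel₀ _ hnw.ne']
        refine ⟨(snocE p ε, t), hmem p ε (le_of_eq hpn) (by rw [abs_of_pos hε0]), ?_⟩
        have hD : 0 ≤ fEx n (snocE p ε + t • v) - fEx n (snocE p ε) := by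
          rw [fEx_snoc_add, fEx_snocE, ← hsdef, ← hwdef, hptw, hpn]
          rw [abs_of_nonneg (by nlinarith : (0:ℝ) ≤ ε + t * s - (ε - t * ‖w‖))]
          simp only [sub_self, abs_zero]
          nlinarith
        exact div_nonneg hD ht0.le
    · push_neg at hs
      by_cases hw : w = (0 : EuclideanSpace ℝ (Fin n))
      · refine ⟨(snocE 0 (-ε), t), hmem 0 (-ε) (by simp; positivity)
          (by rw [abs_neg, abs_of_pos hε0]), ?_⟩
        have hD : 0 ≤ fEx n (snocE 0 (-ε) + t • v) - fEx n (snocE 0 (-ε)) := by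
          rw [fEx_snoc_add, fEx_snocE, ← hsdef, ← hwdef, hw]
          simp only [smul_zero, add_zero, norm_zero, sub_zero]
          rw [abs_of_neg (by nlinarith : -ε + t * s < 0), abs_of_neg (by linarith : -ε < 0)]
          nlinarith
        exact div_nonneg hD ht0.le
      · have hnw : 0 < ‖w‖ := norm_pos_iff.mpr hw
        set p : EuclideanSpace ℝ (Fin n) := (ε / ‖w‖) • w with hpdef
        have hpn : ‖p‖ = ε := by
          rw [hpdef, norm_smul, Real.norm_eq_abs,
            abs_of_nonneg (div_nonneg hε0.le hnw.le), div_mul_cancel₀ _ hnw.ne']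
        have hptw : ‖p + t • w‖ = ε + t * ‖w‖ := by
          have hcomb : p + t • w = (ε / ‖w‖ + t) • w := by
            rw [hpdef, ← add_smul]
          have hpos2 : 0 ≤ ε / ‖w‖ + t := by positivity
          rw [hcomb, norm_smul, Real.norm_eq_abs, abs_of_nonneg hpos2, add_mul,
            div_mul_cancel₀ _ hnw.ne']
        refine ⟨(snocE p (-ε), t), hmem p (-ε) (le_of_eq hpn)
          (by rw [abs_neg, abs_of_pos hε0]), ?_⟩
        have hD : 0 ≤ fEx n (snocE p (-ε) + t • v) - fEx n (snocE p (-ε)) := by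
          rw [fEx_snoc_add, fEx_snocE, ← hsdef, ← hwdef, hptw, hpn]
          rw [abs_of_neg (by nlinarith [mul_nonneg ht0.le hnw.le] :
            -ε + t * s - (ε + t * ‖w‖) < 0), abs_of_neg (by linarith : -ε - ε < 0)]
          nlinarith [mul_nonneg ht0.le hnw.le]
        exact div_nonneg hD ht0.le
  exact le_limsup_of_frequently_le hfreq hbdd
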